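/- Let G ⊂ ℝⁿ (n ≥ 1) be a convex body in which a ball of radius r > 0 rolls freely. Then there exists C > 0 such that for all nonempty compact convex subsets K, L of G, C·d_H(K,L)^((n+1)/2) ≤ ρ_G(K,L). -/

import Mathlib

open MeasureTheory Metric Pointwise

/-- `ρ_G(K,L) := 2·Vol(G + K ∪̃ L) − Vol(G + K) − Vol(G + L)`. -/
noncomputable def rhoDist {n : ℕ} (G K L : Set (EuclideanSpace ℝ (Fin n))) : ℝ :=
  2 * (volume (G + closure (convexHull ℝ (K ∪ L)))).toReal
    - (volume (G + K)).toReal - (volume (G + L)).toReal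

open RealInnerProductSpace in

/-- Volume of a box in Euclidean space. -/
lemma volume_pi_box {n : ℕ} (t : Fin n → Set ℝ) (ht : ∀ i, MeasurableSet (t i)) :
    (volume : Measure (EuclideanSpace ℝ (Fin n))) (WithLp.ofLp ⁻¹' Set.univ.pi t) = ∏ i, volume (t i) := by
  have h := (EuclideanSpace.volume_preserving_symm_measurableEquiv_toLp (Fin n)).measure_preimage
    (MeasurableSet.univ_pi ht).nullMeasurableSet
  rw [← volume_pi_pi t]
  exact h

open RealInnerProductSpace in
lemma exists_box {n : ℕ} (hn : 1 ≤ n) (u q : EuclideanSpace ℝ (Fin n)) (hu : ‖u‖ = 1)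
    {s δ : ℝ} (hs : 0 < s) (hδ : 0 < δ) (hδs : δ ≤ s) :
    ∃ S : Set (EuclideanSpace ℝ (Fin n)), MeasurableSet S ∧
      S ⊆ closedBall q s ∧
      (∀ y ∈ S, ⟪u, q⟫ + s - δ + δ / 4 ≤ ⟪u, y⟫) ∧
      δ / 4 * (2 * Real.sqrt (δ * s / (2 * n))) ^ (n - 1) ≤ (volume S).toReal := by
  obtain ⟨m, rfl⟩ : ∃ m, n = m + 1 := ⟨n - 1, (Nat.succ_pred_eq_of_pos hn).symm⟩
  set c := Real.sqrt (δ * s / (2 * ((m : ℝ) + 1))) with hc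
  have hcpos : 0 < c := Real.sqrt_pos.2 (by positivity)
  have hc2 : c ^ 2 = δ * s / (2 * ((m : ℝ) + 1)) := Real.sq_sqrt (by positivity)
  have hcard : Module.finrank ℝ (EuclideanSpace ℝ (Fin (m + 1))) = Fintype.card (Fin (m + 1)) := by
    simp
  have horth : Orthonormal ℝ (({0} : Set (Fin (m + 1))).restrict (fun _ => u)) := by
    constructor
    · intro i; exact hu
    · intro i j hij
      exact absurd (Subtype.ext ((Set.eq_of_mem_singleton i.2).trans
        (Set.eq_of_mem_singleton j.2).symm)) hij
  obtain ⟨b, hb0⟩ := horth.exists_orthonormalBasis_extension_of_card_eq hcard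
  have hb0' : b 0 = u := hb0 0 rfl
  set μ : Fin (m + 1) → ℝ := fun i => b.repr q i with hμ
  have hμ0 : μ 0 = ⟪u, q⟫ := by show b.repr q 0 = _; rw [b.repr_apply_apply, hb0']
  set A : ℝ := ⟪u, q⟫ + s - δ with hA
  set t : Fin (m + 1) → Set ℝ := fun i =>
    if i = 0 then Set.Icc (A + δ / 4) (A + δ / 2)
    else Set.Icc (μ i - c) (μ i + c) with ht
  have htmeas : ∀ i, MeasurableSet (t i) := by
    intro i; rw [ht]; dsimp only; split <;> exact measurableSet_Icc
  refine ⟨b.repr ⁻¹' (WithLp.ofLp ⁻¹' Set.univ.pi t), ((MeasurableSet.univ_pi htmeas).preimage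
    (PiLp.volume_preserving_ofLp _).measurable).preimage
    b.repr.continuous.measurable, ?_, ?_, ?_⟩
  · -- subset of closed ball
    intro y hy
    have hy' : ∀ i, b.repr y i ∈ t i := fun i => (Set.mem_univ_pi.mp hy) i
    have hx0 : b.repr y 0 ∈ Set.Icc (A + δ / 4) (A + δ / 2) := by
      simpa [ht] using hy' 0
    have hxi : ∀ i : Fin m, |b.repr y i.succ - μ i.succ| ≤ c := by
      intro i
      have this : b.repr y i.succ ∈ Set.Icc (μ i.succ - c) (μ i.succ + c) := by
        simpa [ht, Fin.succ_ne_zero i] using hy' i.succ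
      rw [abs_le]
      constructor <;> [linarith [this.1]; linarith [this.2]]
    rw [mem_closedBall, ← b.repr.dist_map y q, EuclideanSpace.dist_eq]
    have hsum : ∑ i, dist (b.repr y i) (b.repr q i) ^ 2 ≤ (s - δ / 2) ^ 2 + m * c ^ 2 := by
      rw [Fin.sum_univ_succ]
      have h0 : dist (b.repr y 0) (b.repr q 0) ^ 2 ≤ (s - δ / 2) ^ 2 := by
        rw [Real.dist_eq]
        have h1 : |b.repr y 0 - b.repr q 0| ≤ s - δ / 2 := by
          rw [abs_le]
          have e : b.repr q 0 = μ 0 := rfl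
          rw [e, hμ0]
          constructor <;> [linarith [hx0.1]; linarith [hx0.2]]
        have h2 : (0:ℝ) ≤ |b.repr y 0 - b.repr q 0| := abs_nonneg _
        nlinarith
      have hrest : ∑ i : Fin m, dist (b.repr y i.succ) (b.repr q i.succ) ^ 2
          ≤ ∑ _i : Fin m, c ^ 2 := by
        apply Finset.sum_le_sum
        intro i _
        have := hxi i
        rw [Real.dist_eq]
        nlinarith [abs_nonneg (b.repr y i.succ - μ i.succ)]
      have : ∑ _i : Fin m, c ^ 2 = m * c ^ 2 := by
        rw [Finset.sum_const, Finset.card_univ, Fintype.card_fin, nsmul_eq_mul]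
      linarith
    calc Real.sqrt (∑ i, dist (b.repr y i) (b.repr q i) ^ 2)
        ≤ Real.sqrt (s ^ 2) := by
          apply Real.sqrt_le_sqrt
          have hm : (m : ℝ) * c ^ 2 ≤ δ * s / 2 := by
            rw [hc2]
            have h1 : (0:ℝ) < (m:ℝ) + 1 := by positivity
            have h2 : (m:ℝ)/((m:ℝ)+1) ≤ 1 := by
              rw [div_le_one h1]; linarith
            calc (m:ℝ) * (δ*s/(2*((m:ℝ)+1))) = (δ*s/2) * ((m:ℝ)/((m:ℝ)+1)) := by
                  field_simp
              _ ≤ (δ*s/2) * 1 := by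
                  apply mul_le_mul_of_nonneg_left h2 (by positivity)
              _ = δ*s/2 := by ring
          nlinarith
      _ = s := Real.sqrt_sq hs.le
  · -- inner product lower bound
    intro y hy
    have hy' : ∀ i, b.repr y i ∈ t i := fun i => (Set.mem_univ_pi.mp hy) i
    have hx0 : b.repr y 0 ∈ Set.Icc (A + δ / 4) (A + δ / 2) := by
      simpa [ht] using hy' 0
    have : b.repr y 0 = ⟪u, y⟫ := by rw [b.repr_apply_apply, hb0']
    rw [← this]
    exact hx0.1
  · -- volume
    rw [b.measurePreserving_repr.measure_preimage
      ((MeasurableSet.univ_pi htmeas).preimage (PiLp.volume_preserving_ofLp _).measurable).nullMeasurableSet]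
    rw [volume_pi_box t htmeas, Fin.prod_univ_succ]
    have e0 : volume (t 0) = ENNReal.ofReal (δ / 4) := by
      rw [ht]; dsimp only; rw [if_pos rfl, Real.volume_Icc]
      congr 1; ring
    have ei : ∀ i : Fin m, volume (t i.succ) = ENNReal.ofReal (2 * c) := by
      intro i
      rw [ht]; dsimp only; rw [if_neg (Fin.succ_ne_zero i), Real.volume_Icc]
      congr 1; ring
    rw [e0]
    rw [Finset.prod_congr rfl (fun i _ => ei i), Finset.prod_const, Finset.card_univ,
      Fintype.card_fin]
    rw [ENNReal.toReal_mul, ENNReal.toReal_pow, ENNReal.toReal_ofReal (by positivity),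
      ENNReal.toReal_ofReal (by positivity)]
    apply le_of_eq
    have : ((m : ℝ) + 1) = ((m + 1 : ℕ) : ℝ) := by push_cast; ring
    rw [Nat.add_sub_cancel]
    rw [hc, this]

open RealInnerProductSpace in
set_option maxHeartbeats 1000000 in
lemma key_ineq {n : ℕ} (hn : 1 ≤ n) {G : Set (EuclideanSpace ℝ (Fin n))}
    (hGcv : Convex ℝ G) (hGcp : IsCompact G)
    {r : ℝ} (hr : 0 < r)
    (hroll : ∀ p ∈ frontier G, ∃ x : EuclideanSpace ℝ (Fin n),
      p ∈ closedBall x r ∧ closedBall x r ⊆ G)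
    {K L : Set (EuclideanSpace ℝ (Fin n))}
    (hKG : K ⊆ G) (hLne : L.Nonempty) (hLcp : IsCompact L) (hLcv : Convex ℝ L) (hLG : L ⊆ G)
    {d : ℝ} (hd : 0 < d) (hdr : d ≤ r) {x0 : EuclideanSpace ℝ (Fin n)}
    (hx0K : x0 ∈ K) (hx0 : d ≤ infDist x0 L) :
    (volume (G + L)).toReal + d / 2 / 4 * (2 * Real.sqrt (d / 2 * (r / 2) / (2 * n))) ^ (n - 1)
      ≤ (volume (G + closure (convexHull ℝ (K ∪ L)))).toReal := by
  set M := closure (convexHull ℝ (K ∪ L)) with hM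
  have hMcv : Convex ℝ M := (convex_convexHull ℝ _).closure
  have hLM : L ⊆ M := (Set.subset_union_right).trans
    ((subset_convexHull ℝ _).trans subset_closure)
  have hKM : K ⊆ M := (Set.subset_union_left).trans
    ((subset_convexHull ℝ _).trans subset_closure)
  have hMG : M ⊆ G := closure_minimal
    (convexHull_min (Set.union_subset hKG hLG) hGcv) hGcp.isClosed
  -- closest point p in L to x0
  obtain ⟨p, hpL, hpd⟩ := hLcp.exists_infDist_eq_dist hLne x0
  have hdp : d ≤ dist x0 p := hpd ▸ hx0
  have hxp : 0 < ‖x0 - p‖ := by rw [← dist_eq_norm]; linarith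
  set u := ‖x0 - p‖⁻¹ • (x0 - p) with hu_def
  have hu : ‖u‖ = 1 := by
    rw [hu_def, norm_smul, norm_inv, norm_norm, inv_mul_cancel₀ hxp.ne']
  have hproj : ∀ w ∈ L, ⟪x0 - p, w - p⟫ ≤ 0 := by
    have heq : ‖x0 - p‖ = ⨅ w : L, ‖x0 - ↑w‖ := by
      rw [← dist_eq_norm, ← hpd, infDist_eq_iInf]
      simp only [dist_eq_norm]
    exact (norm_eq_iInf_iff_real_inner_le_zero hLcv hpL).mp heq
  have hsep : ∀ w ∈ L, ⟪u, w⟫ + d ≤ ⟪u, x0⟫ := by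
    intro w hw
    have h2 := hproj w hw
    have h1 : ‖x0 - p‖ ^ 2 ≤ ⟪x0 - p, x0 - w⟫ := by
      have e : ⟪x0 - p, x0 - w⟫ = ⟪x0 - p, x0 - p⟫ - ⟪x0 - p, w - p⟫ := by
        rw [← inner_sub_right]
        congr 1
        abel
      rw [e, real_inner_self_eq_norm_sq]
      linarith
    have h3 : d ≤ ⟪u, x0 - w⟫ := by
      rw [hu_def, real_inner_smul_left]
      have : d ≤ ‖x0 - p‖ := by rw [← dist_eq_norm]; linarith
      calc d ≤ ‖x0 - p‖⁻¹ * ‖x0 - p‖ ^ 2 := by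
            rw [pow_two, ← mul_assoc, inv_mul_cancel₀ hxp.ne', one_mul]; exact this
        _ ≤ ‖x0 - p‖⁻¹ * ⟪x0 - p, x0 - w⟫ := by
            apply mul_le_mul_of_nonneg_left h1 (by positivity)
    have h4 : ⟪u, x0 - w⟫ = ⟪u, x0⟫ - ⟪u, w⟫ := inner_sub_right u x0 w
    linarith
  -- maximizers
  have hGne : G.Nonempty := ⟨p, hLG hpL⟩
  have hcont : Continuous fun w : EuclideanSpace ℝ (Fin n) => ⟪u, w⟫ :=
    continuous_const.inner continuous_id
  obtain ⟨l, hlL, hlmax'⟩ := hLcp.exists_isMaxOn hLne hcont.continuousOn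
  obtain ⟨g, hgG, hgmax'⟩ := hGcp.exists_isMaxOn hGne hcont.continuousOn
  have hlmax : ∀ w ∈ L, ⟪u, w⟫ ≤ ⟪u, l⟫ := fun w hw => hlmax' hw
  have hgmax : ∀ w ∈ G, ⟪u, w⟫ ≤ ⟪u, g⟫ := fun w hw => hgmax' hw
  -- g is on the frontier
  have hgfr : g ∈ frontier G := by
    rw [hGcp.isClosed.frontier_eq]
    refine ⟨hgG, fun hgi => ?_⟩
    obtain ⟨ε, hε, hball⟩ := Metric.isOpen_iff.mp isOpen_interior g hgi
    have hmem : g + (ε / 2) • u ∈ G := by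
      apply interior_subset
      apply hball
      rw [mem_ball, dist_eq_norm, add_sub_cancel_left, norm_smul, Real.norm_eq_abs,
        abs_of_pos (by linarith), hu]
      linarith
    have h5 := hgmax _ hmem
    rw [inner_add_right, real_inner_smul_right, real_inner_self_eq_norm_sq, hu] at h5
    nlinarith
  -- rolling ball at g
  obtain ⟨x, hgx, hxG⟩ := hroll g hgfr
  have hxu_le : ⟪u, x⟫ + r ≤ ⟪u, g⟫ := by
    have hmem : x + r • u ∈ G := by
      apply hxG
      rw [mem_closedBall, dist_eq_norm, add_sub_cancel_left, norm_smul, Real.norm_eq_abs,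
        abs_of_pos hr, hu, mul_one]
    have h5 := hgmax _ hmem
    rw [inner_add_right, real_inner_smul_right, real_inner_self_eq_norm_sq, hu] at h5
    nlinarith
  have hxu_ge : ⟪u, g⟫ - r ≤ ⟪u, x⟫ := by
    have h1 : ⟪u, g - x⟫ ≤ ‖u‖ * ‖g - x‖ := real_inner_le_norm u (g - x)
    have h2 : ‖g - x‖ ≤ r := by rw [← dist_eq_norm]; exact mem_closedBall.mp hgx
    have h3 : ⟪u, g - x⟫ = ⟪u, g⟫ - ⟪u, x⟫ := inner_sub_right u g x
    rw [hu, one_mul] at h1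
    linarith
  have hxu : ⟪u, x⟫ = ⟪u, g⟫ - r := le_antisymm (by linarith) hxu_ge
  set h := ⟪u, g⟫ + ⟪u, l⟫ with hh
  set c0 := x + l with hc0
  set z := g + x0 with hz_def
  have hGLle : ∀ w ∈ G + L, ⟪u, w⟫ ≤ h := by
    intro w hw
    rw [Set.mem_add] at hw
    obtain ⟨a, ha, bb, hb, rfl⟩ := hw
    rw [inner_add_right]
    have := hgmax a ha
    have := hlmax bb hb
    rw [hh]; linarith
  have hball : closedBall c0 r ⊆ G + L := by
    intro y hy
    have hyx : y - l ∈ closedBall x r := by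
      rw [mem_closedBall] at hy ⊢
      have e : dist (y - l) x = dist y c0 := by
        rw [dist_eq_norm, dist_eq_norm, hc0]
        congr 1
        abel
      rw [e]; exact hy
    have := Set.add_mem_add (hxG hyx) hlL
    simpa using this
  have hcu : ⟪u, c0⟫ = h - r := by
    rw [hc0, inner_add_right, hxu, hh]; ring
  have hzM : z ∈ G + M := Set.add_mem_add hgG (hKM hx0K)
  have hzu : h + d ≤ ⟪u, z⟫ := by
    have := hsep l hlL
    rw [hz_def, inner_add_right, hh]
    linarith
  set a := ⟪u, z⟫ - ⟪u, c0⟫ with ha_def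
  have har : r + d ≤ a := by rw [ha_def, hcu]; linarith
  have hart : 0 < a - r := by linarith
  set t := d / (2 * (a - r)) with ht_def
  have ht0 : 0 < t := by positivity
  have ht2 : t ≤ 1 / 2 := by
    rw [ht_def, div_le_div_iff₀ (by positivity) (by norm_num)]
    linarith
  have ht1 : (0:ℝ) < 1 - t := by linarith
  set s := (1 - t) * r with hs_def
  have hs2 : r / 2 ≤ s := by rw [hs_def]; nlinarith
  have hs0 : 0 < s := by positivity
  set δ := d / 2 with hδ_def
  have hδ0 : 0 < δ := by positivity
  have hδs : δ ≤ s := by rw [hδ_def]; linarith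
  set q := c0 + t • (z - c0) with hq_def
  have hqu : ⟪u, q⟫ = h + δ - s := by
    rw [hq_def, inner_add_right, real_inner_smul_right, inner_sub_right, hcu]
    rw [hδ_def, hs_def]
    have e1 : ⟪u, z⟫ - (h - r) = a := by rw [ha_def, hcu]
    rw [e1]
    have key : t * (a - r) * 2 = d := by rw [ht_def]; field_simp [hart.ne']
    field_simp [ht_def]
    linear_combination key
  obtain ⟨S, hSmeas, hSball, hSinner, hSvol⟩ := exists_box hn u q hu hs0 hδ0 hδs
  have hSinner' : ∀ y ∈ S, h + δ / 4 ≤ ⟪u, y⟫ := by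
    intro y hy
    have := hSinner y hy
    rw [hqu] at this
    linarith
  have hGMcv : Convex ℝ (G + M) := hGcv.add hMcv
  have hGLM : G + L ⊆ G + M := Set.add_subset_add_left hLM
  have hcM : closedBall c0 r ⊆ G + M := hball.trans hGLM
  have hSsub : S ⊆ G + M := by
    intro y hy
    have hyb := hSball hy
    rw [mem_closedBall, dist_eq_norm] at hyb
    have hw : c0 + (1 - t)⁻¹ • (y - q) ∈ closedBall c0 r := by
      rw [mem_closedBall, dist_eq_norm, add_sub_cancel_left, norm_smul, norm_inv,
        Real.norm_eq_abs, abs_of_pos ht1]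
      rw [inv_mul_le_iff₀ ht1]
      rw [hs_def] at hyb
      linarith [hyb]
    have hmem := hGMcv (hcM hw) hzM (by linarith : (0:ℝ) ≤ 1 - t) ht0.le (by ring)
    have e : (1 - t) • (c0 + (1 - t)⁻¹ • (y - q)) + t • z = y := by
      have e1 : (1 - t) • ((1 - t)⁻¹ • (y - q)) = y - q := smul_inv_smul₀ ht1.ne' _
      rw [smul_add, e1, hq_def]
      rw [smul_sub, sub_smul, one_smul]
      abel
    rwa [e] at hmem
  have hdisj : Disjoint (G + L) S := by
    rw [Set.disjoint_left]
    intro w hw hwS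
    have h1 := hGLle w hw
    have h2 := hSinner' w hwS
    linarith
  -- measure arithmetic
  have hbigsub : G + M ⊆ G + G := Set.add_subset_add_left hMG
  have hbig : volume (G + M) ≠ ⊤ :=
    ((measure_mono hbigsub).trans_lt (hGcp.add hGcp).measure_lt_top).ne
  have hGL_ne : volume (G + L) ≠ ⊤ := ((measure_mono hGLM).trans_lt hbig.lt_top).ne
  have hS_ne : volume S ≠ ⊤ := ((measure_mono hSsub).trans_lt hbig.lt_top).ne
  have hcup : volume (G + L) + volume S ≤ volume (G + M) := by
    rw [← measure_union hdisj hSmeas]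
    exact measure_mono (Set.union_subset hGLM hSsub)
  have final : (volume (G + L)).toReal + (volume S).toReal ≤ (volume (G + M)).toReal := by
    rw [← ENNReal.toReal_add hGL_ne hS_ne]
    exact ENNReal.toReal_mono hbig hcup
  have hmono : δ / 4 * (2 * Real.sqrt (δ * (r / 2) / (2 * n))) ^ (n - 1)
      ≤ δ / 4 * (2 * Real.sqrt (δ * s / (2 * n))) ^ (n - 1) := by
    have hn' : (0:ℝ) < n := by exact_mod_cast hn
    gcongr
  rw [hδ_def] at hmono hSvol ⊢
  linarith [hmono, hSvol, final]

theorem stmt4 {n : ℕ} (hn : 1 ≤ n) (G : Set (EuclideanSpace ℝ (Fin n)))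
    (hGcv : Convex ℝ G) (hGcp : IsCompact G) (hGint : (interior G).Nonempty)
    (r : ℝ) (hr : 0 < r)
    (hroll : ∀ p ∈ frontier G, ∃ x : EuclideanSpace ℝ (Fin n),
      p ∈ closedBall x r ∧ closedBall x r ⊆ G) :
    ∃ C : ℝ, 0 < C ∧ ∀ K L : Set (EuclideanSpace ℝ (Fin n)),
      K.Nonempty → IsCompact K → Convex ℝ K → K ⊆ G →
      L.Nonempty → IsCompact L → Convex ℝ L → L ⊆ G →
      C * hausdorffDist K L ^ (((n : ℝ) + 1) / 2) ≤ rhoDist G K L := by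
  simp only [rhoDist]
  have hn' : (0:ℝ) < n := by exact_mod_cast hn
  obtain ⟨c₀, hc₀⟩ := hGint
  obtain ⟨R, hR0, hRball⟩ := hGcp.isBounded.subset_closedBall_lt 0 c₀
  set D := 2 * R with hD_def
  have hD : 0 < D := by positivity
  set κ := min 1 (r / D) with hκ_def
  have hκ : 0 < κ := lt_min one_pos (by positivity)
  have hκ1 : κ ≤ 1 := min_le_left _ _
  set γ := 2 * Real.sqrt (r / (8 * (n:ℝ))) with hγ_def
  have hγ : 0 < γ := by positivity
  refine ⟨γ ^ (n - 1) / 8 * κ ^ (((n:ℝ) + 1) / 2), by positivity, ?_⟩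
  intro K L hKne hKcp hKcv hKG hLne hLcp hLcv hLG
  set dH := hausdorffDist K L with hdH_def
  have hdH0 : 0 ≤ dH := hausdorffDist_nonneg
  set M := closure (convexHull ℝ (K ∪ L)) with hM
  have hKM : K ⊆ M := (Set.subset_union_left).trans
    ((subset_convexHull ℝ _).trans subset_closure)
  have hLM : L ⊆ M := (Set.subset_union_right).trans
    ((subset_convexHull ℝ _).trans subset_closure)
  have hMG : M ⊆ G := closure_minimal
    (convexHull_min (Set.union_subset hKG hLG) hGcv) hGcp.isClosed
  have hbig : volume (G + M) ≠ ⊤ :=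
    ((measure_mono (Set.add_subset_add_left hMG)).trans_lt
      (hGcp.add hGcp).measure_lt_top).ne
  have hAB : (volume (G + K)).toReal ≤ (volume (G + M)).toReal :=
    ENNReal.toReal_mono hbig (measure_mono (Set.add_subset_add_left hKM))
  have hAC : (volume (G + L)).toReal ≤ (volume (G + M)).toReal :=
    ENNReal.toReal_mono hbig (measure_mono (Set.add_subset_add_left hLM))
  rcases eq_or_lt_of_le hdH0 with heq | hpos
  · rw [← heq, Real.zero_rpow (by positivity : (0:ℝ) < ((n:ℝ)+1)/2).ne', mul_zero]
    linarith
  · -- find a far witness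
    have hwit : (∃ x ∈ K, dH ≤ infDist x L) ∨ (∃ y ∈ L, dH ≤ infDist y K) := by
      by_contra hcon
      push_neg at hcon
      obtain ⟨h1, h2⟩ := hcon
      obtain ⟨x1, hx1, hmax1'⟩ := hKcp.exists_isMaxOn hKne
        (continuous_infDist_pt L).continuousOn
      obtain ⟨y1, hy1, hmax2'⟩ := hLcp.exists_isMaxOn hLne
        (continuous_infDist_pt K).continuousOn
      have hle : hausdorffDist K L ≤ max (infDist x1 L) (infDist y1 K) :=
        hausdorffDist_le_of_infDist
          (le_max_iff.2 (Or.inl infDist_nonneg))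
          (fun x hx => (hmax1' hx).trans (le_max_left _ _))
          (fun y hy => (hmax2' hy).trans (le_max_right _ _))
      have hlt : max (infDist x1 L) (infDist y1 K) < dH :=
        max_lt (h1 x1 hx1) (h2 y1 hy1)
      rw [← hdH_def] at hle
      linarith
    have hdHD : dH ≤ D := by
      have hb : ∀ (A B : Set (EuclideanSpace ℝ (Fin n))), A ⊆ G → B.Nonempty → B ⊆ G →
          ∀ x ∈ A, infDist x B ≤ D := by
        intro A B hAG hBne hBG x hx
        obtain ⟨y, hy⟩ := hBne
        calc infDist x B ≤ dist x y := infDist_le_dist_of_mem hy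
          _ ≤ dist x c₀ + dist y c₀ := dist_triangle_right x y c₀
          _ ≤ R + R := add_le_add (hRball (hAG hx)) (hRball (hBG hy))
          _ = D := by rw [hD_def]; ring
      exact hausdorffDist_le_of_infDist hD.le
        (fun x hx => hb K L hKG hLne hLG x hx)
        (fun y hy => hb L K hLG hKne hKG y hy)
    set d := min dH r with hd_def
    have hd0 : 0 < d := lt_min hpos hr
    have hdr : d ≤ r := min_le_right _ _
    have hκd : κ * dH ≤ d := by
      rcases min_cases dH r with ⟨he, _⟩ | ⟨he, hle⟩
      · rw [hd_def, he]; nlinarith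
      · rw [hd_def, he]
        have h3 : κ ≤ r / D := min_le_right _ _
        have h4 : (r / D) * dH ≤ (r / D) * D := by
          apply mul_le_mul_of_nonneg_left hdHD (by positivity)
        have h5 : (r / D) * D = r := by field_simp
        nlinarith
    -- the analytic bound
    have hT : γ ^ (n - 1) / 8 * κ ^ (((n:ℝ) + 1) / 2) * dH ^ (((n:ℝ) + 1) / 2)
        ≤ d / 2 / 4 * (2 * Real.sqrt (d / 2 * (r / 2) / (2 * (n:ℝ)))) ^ (n - 1) := by
      have e1 : d / 2 * (r / 2) / (2 * (n:ℝ)) = d * (r / (8 * (n:ℝ))) := by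
        field_simp; ring
      have e2 : 2 * Real.sqrt (d / 2 * (r / 2) / (2 * (n:ℝ))) = γ * Real.sqrt d := by
        rw [e1, Real.sqrt_mul hd0.le, hγ_def]; ring
      rw [e2]
      have e4 : d / 2 / 4 * (γ * Real.sqrt d) ^ (n - 1)
          = γ ^ (n - 1) / 8 * (d * Real.sqrt d ^ (n - 1)) := by
        rw [mul_pow]; ring
      rw [e4]
      have e5 : d * Real.sqrt d ^ (n - 1) = d ^ (((n:ℝ) + 1) / 2) := by
        rw [Real.sqrt_eq_rpow, ← Real.rpow_natCast (d ^ ((1:ℝ) / 2)) (n - 1),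
          ← Real.rpow_mul hd0.le]
        nth_rewrite 1 [← Real.rpow_one d]
        rw [← Real.rpow_add hd0]
        congr 1
        have hcast : ((n - 1 : ℕ) : ℝ) = (n : ℝ) - 1 := by
          rw [Nat.cast_sub hn]; simp
        rw [hcast]; ring
      rw [e5, mul_assoc, ← Real.mul_rpow hκ.le hdH0]
      apply mul_le_mul_of_nonneg_left _ (by positivity)
      exact Real.rpow_le_rpow (by positivity) hκd (by positivity)
    rcases hwit with ⟨x0, hx0K, hx0L⟩ | ⟨y0, hy0L, hy0K⟩
    · have hkey := key_ineq hn hGcv hGcp hr hroll hKG hLne hLcp hLcv hLG hd0 hdr hx0K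
        (le_trans (min_le_left _ _) hx0L)
      rw [← hM] at hkey
      linarith
    · have hkey := key_ineq hn hGcv hGcp hr hroll hLG hKne hKcp hKcv hKG hd0 hdr hy0L
        (le_trans (min_le_left _ _) hy0K)
      rw [Set.union_comm L K, ← hM] at hkey
      linarith
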